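/- Fix n ≥ 1 and real numbers α, β with −1 ≤ α < β ≤ 1, α = −β, and αβ > −1/n. Set τ = 0, a = 1/(nβ²), b = (n−1)/(n(1−β²)). Then every point x = (x_1, x̄) ∈ ℝ × ℝ^{n−1} with ‖x‖ ≤ 1 and α ≤ x_1 ≤ β satisfies a·x_1² + b·‖x̄‖² ≤ 1. -/

import Mathlib

open scoped RealInnerProductSpace
open Matrix

/-- Feasibility of the claimed minimum volume circumscribed ellipsoid of a symmetric slab:
with `α = -β`, `αβ > -1/n`, `a = 1/(nβ²)`, `b = (n-1)/(n(1-β²))`, every point `x` of the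
slab `{x ∈ B_n : α ≤ x₁ ≤ β}` satisfies `a x₁² + b ‖x̄‖² ≤ 1`, where
`‖x̄‖² = ‖x‖² - x₁²`. -/
theorem symmetric_slab_ellipsoid_feasibility
    (n : ℕ) (hn : 2 ≤ n) (α β : ℝ)
    (h1 : -1 ≤ α) (h2 : α < β) (h3 : β ≤ 1)
    (hsym : α = -β) (hab : α * β > -(1 / n))
    (a b : ℝ) (ha : a = 1 / (n * β ^ 2)) (hb : b = (n - 1) / (n * (1 - β ^ 2)))
    (x : EuclideanSpace ℝ (Fin n)) (hx : ‖x‖ ≤ 1)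
    (hx1 : α ≤ x ⟨0, by omega⟩) (hx2 : x ⟨0, by omega⟩ ≤ β) :
    a * (x ⟨0, by omega⟩) ^ 2 + b * (‖x‖ ^ 2 - (x ⟨0, by omega⟩) ^ 2) ≤ 1 := by
  set x₁ : ℝ := x ⟨0, by omega⟩ with hx₁
  have hN : (2 : ℝ) ≤ (n : ℝ) := by exact_mod_cast hn
  have hβpos : 0 < β := by linarith [hsym ▸ h2]
  have hβsq : β ^ 2 < 1 / n := by
    have : -β * β > -(1 / n) := hsym ▸ hab
    nlinarith
  have hβsqpos : 0 < β ^ 2 := by positivity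
  have h1β : 0 < 1 - β ^ 2 := by
    have : (1 : ℝ) / n ≤ 1 / 2 := by
      apply div_le_div_of_nonneg_left <;> linarith
    nlinarith
  have hx1sq : x₁ ^ 2 ≤ β ^ 2 := by
    have := hsym ▸ hx1
    nlinarith
  have hbnn : 0 ≤ b := by
    rw [hb]
    have : (0:ℝ) ≤ (n:ℝ) - 1 := by linarith
    positivity
  have habq : a - b ≥ 0 := by
    rw [ha, hb]
    have hnb : (n:ℝ) * β ^ 2 < 1 := by
      rw [mul_comm, ← lt_div_iff₀ (by linarith : (0:ℝ) < (n:ℝ))]; exact hβsq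
    rw [ge_iff_le, sub_nonneg, div_le_div_iff₀ (by positivity) (by positivity)]
    nlinarith
  have hkey : a * β ^ 2 + b * (1 - β ^ 2) = 1 := by
    rw [ha, hb]
    field_simp
    ring
  have hxsq : ‖x‖ ^ 2 ≤ 1 := by nlinarith [norm_nonneg x]
  have step1 : b * (‖x‖ ^ 2 - x₁ ^ 2) ≤ b * (1 - x₁ ^ 2) := by
    apply mul_le_mul_of_nonneg_left (by linarith) hbnn
  nlinarith [mul_le_mul_of_nonneg_left hx1sq habq]
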